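/- In any algebra satisfying (B1)–(B10), one has ∼̇∼̇¬x = ¬x and ¬¬∼̇x = ∼̇x for all x. -/
import Mathlib


theorem stmt {A : Type*} [DistribLattice A] [BoundedOrder A]
    (n s : A → A)
    (B1 : ∀ x : A, x ⊓ n x = ⊥)
    (B2 : ∀ x : A, x ⊔ s x = ⊤)
    (B3 : ∀ x : A, n x ⊓ s (n x) = ⊥)
    (B4 : ∀ x : A, s x ⊔ n (s x) = ⊤)
    (B5 : ∀ x y : A, s (x ⊓ y) = s x ⊔ s y)
    (B6 : ∀ x y : A, n (x ⊔ y) = n x ⊓ n y)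
    (B7 : ∀ x y : A, n (x ⊓ n y) = n x ⊔ n (n y))
    (B8 : ∀ x y : A, s (x ⊔ s y) = s x ⊓ s (s y))
    (B9 : ∀ x y : A, (x ⊔ y) ⊓ s (x ⊔ y) ≤ x ⊔ n x)
    (B10 : ∀ x y : A, x ⊓ s x ⊓ y ⊓ s y ≤ s (x ⊔ y)) :
    ∀ x : A, s (s (n x)) = n x ∧ n (n (s x)) = s x := by
  -- s ⊤ = ⊥
  have hs_le : ∀ y : A, s ⊤ ≤ s y := by
    intro y
    have h := B5 ⊤ y
    rw [top_inf_eq] at h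
    rw [h]; exact le_sup_left
  have h1 : s ⊤ ≤ n ⊥ := by
    have h := B9 ⊥ ⊤
    simpa using h
  have hstop : s ⊤ = ⊥ := by
    have h2 : s ⊤ ≤ n ⊥ ⊓ s (n ⊥) := le_inf h1 (hs_le (n ⊥))
    rw [B3 ⊥] at h2
    exact le_bot_iff.mp h2
  have hnbot : n ⊥ = ⊤ := by
    have h := B4 ⊤
    rwa [hstop, bot_sup_eq] at h
  intro x
  have uniq : ∀ b c c' : A, b ⊓ c = ⊥ → b ⊔ c = ⊤ → b ⊓ c' = ⊥ → b ⊔ c' = ⊤ → c = c' := by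
    intro b c c' h1 h2 h3 h4
    have hc : IsCompl b c := isCompl_iff.mpr ⟨disjoint_iff.mpr h1, codisjoint_iff.mpr h2⟩
    have hc' : IsCompl b c' := isCompl_iff.mpr ⟨disjoint_iff.mpr h3, codisjoint_iff.mpr h4⟩
    exact hc.right_unique hc'
  constructor
  · -- s (s (n x)) = n x
    refine (uniq (s (n x)) (s (s (n x))) (n x) ?_ (B2 _) ?_ ?_)
    · have h := B8 (n x) (n x)
      rw [B2 (n x)] at h
      rw [← h, hstop]
    · rw [inf_comm]; exact B3 x
    · rw [sup_comm]; exact B2 (n x)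
  · -- n (n (s x)) = s x
    refine (uniq (n (s x)) (n (n (s x))) (s x) (B1 _) ?_ ?_ ?_)
    · have h := B7 (s x) (s x)
      rw [B1 (s x), hnbot] at h
      exact h.symm
    · rw [inf_comm]; exact B1 (s x)
    · rw [sup_comm]; exact B4 x
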